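/- Let A be an ℕ-graded commutative ring, M and N two ℤ-graded A-modules, and a ∈ A_1 a degree-1 homogeneous element. Then there is a natural isomorphism M[a⁻¹]_0 ⊗_{A[a⁻¹]_0} N[a⁻¹]_0 ≅ ((M ⊗_A N)[a⁻¹])_0 of A[a⁻¹]_0-modules. -/

import Mathlib

section

variable {A : Type*} [CommRing A]

/-- The degree-zero part of the graded localization `M[a⁻¹]` of a ℤ-graded module `M`
(`a` of degree 1), as a submodule over the degree-zero ring `A[a⁻¹]₀`:
it is spanned by fractions `m / aⁿ` with `m` homogeneous of degree `n`. -/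
noncomputable def modDegZero (𝒜 : ℤ → Submodule ℤ A) [GradedAlgebra 𝒜] (a : A)
    (M : Type*) [AddCommGroup M] [Module A M] (ℳ : ℤ → AddSubgroup M) :
    @Submodule (HomogeneousLocalization.Away 𝒜 a) (LocalizedModule (Submonoid.powers a) M) _ _
      (Module.compHom _
        (algebraMap (HomogeneousLocalization.Away 𝒜 a)
          (Localization (Submonoid.powers a)))) :=
  letI := Module.compHom (LocalizedModule (Submonoid.powers a) M)
    (algebraMap (HomogeneousLocalization.Away 𝒜 a) (Localization (Submonoid.powers a)))
  Submodule.span (HomogeneousLocalization.Away 𝒜 a)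
    {y | ∃ (n : ℕ) (m : M), m ∈ ℳ (n : ℤ) ∧ (a ^ n : A) • y = LocalizedModule.mk m 1}

/-- The degree-`n` component of the graded tensor product of two ℤ-graded modules. -/
noncomputable def tensorGrade {M N : Type*} [AddCommGroup M] [Module A M] [AddCommGroup N] [Module A N]
    (ℳ : ℤ → AddSubgroup M) (𝒩 : ℤ → AddSubgroup N) (n : ℤ) :
    AddSubgroup (TensorProduct A M N) :=
  AddSubgroup.closure
    {t | ∃ (i j : ℤ) (m : M) (x : N), i + j = n ∧ m ∈ ℳ i ∧ x ∈ 𝒩 j ∧ t = m ⊗ₜ[A] x}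

end

namespace Stmt2Aux

set_option linter.unusedSectionVars false

open LocalizedModule HomogeneousLocalization

variable {A : Type*} [CommRing A] (𝒜 : ℤ → Submodule ℤ A) [GradedAlgebra 𝒜] (a : A)

theorem powMem (n : ℕ) : a ^ n ∈ Submonoid.powers a :=
  Submonoid.pow_mem _ (Submonoid.mem_powers a) n

theorem apow_mem (ha : a ∈ 𝒜 1) (n : ℕ) : a ^ n ∈ 𝒜 (n : ℤ) := by
  simpa using SetLike.pow_mem_graded n ha

/-- `a ^ max(i,0) / a ^ max(-i,0)`, i.e. `a ^ i` in the localization. -/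
noncomputable def wz (i : ℤ) : Localization (Submonoid.powers a) :=
  Localization.mk (a ^ i.toNat) ⟨a ^ (-i).toNat, powMem a _⟩

theorem wz_mul (i j : ℤ) : wz a i * wz a j = wz a (i + j) := by
  rw [wz, wz, wz, Localization.mk_mul, Localization.mk_eq_mk_iff, Localization.r_iff_exists]
  refine ⟨1, ?_⟩
  simp only [Submonoid.coe_one, Submonoid.coe_mul, one_mul, ← pow_add]
  congr 1
  omega

theorem wz_zero : wz a 0 = 1 := by
  rw [wz, ← Localization.mk_one, Localization.mk_eq_mk_iff, Localization.r_iff_exists]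
  exact ⟨1, by simp⟩

theorem wz_natCast (n : ℕ) :
    wz a (n : ℤ) = algebraMap A (Localization (Submonoid.powers a)) (a ^ n) := by
  rw [wz, ← Localization.mk_one_eq_algebraMap, Localization.mk_eq_mk_iff,
    Localization.r_iff_exists]
  refine ⟨1, ?_⟩
  have h1 : ((n : ℤ)).toNat = n := by omega
  have h2 : ((-(n : ℤ))).toNat = 0 := by omega
  simp [h1, h2]

theorem wz_neg_natCast (n : ℕ) :
    wz a (-(n : ℤ)) = Localization.mk 1 ⟨a ^ n, powMem a n⟩ := by
  rw [wz, Localization.mk_eq_mk_iff, Localization.r_iff_exists]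
  refine ⟨1, ?_⟩
  have h1 : ((-(n : ℤ))).toNat = 0 := by omega
  have h2 : ((-(-(n : ℤ)))).toNat = n := by omega
  simp [h1, h2]

theorem wz_smul {P : Type*} [AddCommGroup P]
    [Module (Localization (Submonoid.powers a)) P] (i j : ℤ) (x : P) :
    wz a i • wz a j • x = wz a (i + j) • x := by rw [← mul_smul, wz_mul]

theorem smul_wz_smul {M : Type*} [AddCommGroup M] [Module A M] (n : ℕ)
    (x : LocalizedModule (Submonoid.powers a) M) :
    (a ^ n : A) • wz a (-(n : ℤ)) • x = x := by
  rw [← algebraMap_smul (Localization (Submonoid.powers a)) (a ^ n : A), ← wz_natCast, wz_smul]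
  simp [wz_zero]

theorem eq_wz_of {M : Type*} [AddCommGroup M] [Module A M] (n : ℕ)
    {x y : LocalizedModule (Submonoid.powers a) M} (h : (a ^ n : A) • x = y) :
    x = wz a (-(n : ℤ)) • y := by
  rw [← h, ← algebraMap_smul (Localization (Submonoid.powers a)) (a ^ n : A), ← wz_natCast,
    wz_smul]
  simp [wz_zero]

/-- `c / a ^ n` as an element of the degree-zero homogeneous localization. -/
noncomputable def bmk (ha : a ∈ 𝒜 1) (n : ℕ) (c : A) (hc : c ∈ 𝒜 (n : ℤ)) :
    HomogeneousLocalization.Away 𝒜 a :=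
  HomogeneousLocalization.mk ⟨(n : ℤ), ⟨c, hc⟩, ⟨a ^ n, apow_mem 𝒜 a ha n⟩, powMem a n⟩

theorem bmk_val (ha : a ∈ 𝒜 1) (n : ℕ) (c : A) (hc : c ∈ 𝒜 (n : ℤ)) :
    (bmk 𝒜 a ha n c hc).val = Localization.mk c ⟨a ^ n, powMem a n⟩ :=
  HomogeneousLocalization.val_mk _

theorem mem_neg_eq_zero (hA : ∀ n : ℤ, n < 0 → 𝒜 n = ⊥) {i : ℤ} (hi : i < 0) {c : A}
    (hc : c ∈ 𝒜 i) : c = 0 := by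
  rw [hA i hi] at hc; simpa using hc

/-- Component maps for `beta`. -/
noncomputable def betaComp (ha : a ∈ 𝒜 1) (i : ℤ) :
    𝒜 i →+ HomogeneousLocalization.Away 𝒜 a :=
  if h : 0 ≤ i then
    { toFun := fun c => bmk 𝒜 a ha i.toNat c.1 (by rw [Int.toNat_of_nonneg h]; exact c.2)
      map_zero' := by
        apply HomogeneousLocalization.val_injective
        rw [bmk_val]
        simp [Localization.mk_zero]
      map_add' := fun c d => by
        apply HomogeneousLocalization.val_injective
        rw [HomogeneousLocalization.val_add, bmk_val, bmk_val, bmk_val, Localization.add_mk_self]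
        simp }
  else 0

noncomputable def betaFun (ha : a ∈ 𝒜 1) (c : A) : HomogeneousLocalization.Away 𝒜 a :=
  DirectSum.toAddMonoid (betaComp 𝒜 a ha) (DirectSum.decomposeAddEquiv 𝒜 c)

theorem betaFun_of_mem (ha : a ∈ 𝒜 1) {n : ℕ} {c : A} (hc : c ∈ 𝒜 (n : ℤ)) :
    betaFun 𝒜 a ha c = bmk 𝒜 a ha n c hc := by
  rw [betaFun, DirectSum.decomposeAddEquiv_apply, DirectSum.decompose_of_mem 𝒜 hc,
    DirectSum.toAddMonoid_of, betaComp, dif_pos (by omega : (0 : ℤ) ≤ (n : ℤ))]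
  rfl

theorem betaFun_add (ha : a ∈ 𝒜 1) (c d : A) :
    betaFun 𝒜 a ha (c + d) = betaFun 𝒜 a ha c + betaFun 𝒜 a ha d := by
  rw [betaFun, betaFun, betaFun, map_add, map_add]

theorem betaFun_zero (ha : a ∈ 𝒜 1) : betaFun 𝒜 a ha 0 = 0 := by
  rw [betaFun, map_zero, map_zero]

theorem betaFun_mul (ha : a ∈ 𝒜 1) (hA : ∀ n : ℤ, n < 0 → 𝒜 n = ⊥) (c d : A) :
    betaFun 𝒜 a ha (c * d) = betaFun 𝒜 a ha c * betaFun 𝒜 a ha d := by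
  induction c using DirectSum.Decomposition.inductionOn 𝒜 with
  | zero => rw [zero_mul, betaFun_zero, zero_mul]
  | add c c' hc hc' => rw [add_mul, betaFun_add, betaFun_add, hc, hc', add_mul]
  | homogeneous c =>
    rename_i i
    obtain ⟨c, hc⟩ := c
    dsimp only
    rcases lt_or_ge i 0 with h | h
    · obtain rfl : c = 0 := mem_neg_eq_zero 𝒜 hA h hc
      rw [zero_mul, betaFun_zero, zero_mul]
    · have hc' : c ∈ 𝒜 ((i.toNat : ℕ) : ℤ) := by rwa [Int.toNat_of_nonneg h]
      induction d using DirectSum.Decomposition.inductionOn 𝒜 with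
      | zero => rw [mul_zero, betaFun_zero, mul_zero]
      | add d d' hd hd' => rw [mul_add, betaFun_add, betaFun_add, hd, hd', mul_add]
      | homogeneous d =>
        rename_i j
        obtain ⟨d, hd⟩ := d
        dsimp only
        rcases lt_or_ge j 0 with h2 | h2
        · obtain rfl : d = 0 := mem_neg_eq_zero 𝒜 hA h2 hd
          rw [mul_zero, betaFun_zero, mul_zero]
        · have hd' : d ∈ 𝒜 ((j.toNat : ℕ) : ℤ) := by rwa [Int.toNat_of_nonneg h2]
          have hcd : c * d ∈ 𝒜 ((i.toNat + j.toNat : ℕ) : ℤ) := by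
            have := SetLike.mul_mem_graded hc' hd'
            rwa [show ((i.toNat : ℕ) : ℤ) + ((j.toNat : ℕ) : ℤ) = ((i.toNat + j.toNat : ℕ) : ℤ)
              by push_cast; ring] at this
          rw [betaFun_of_mem 𝒜 a ha hcd, betaFun_of_mem 𝒜 a ha hc', betaFun_of_mem 𝒜 a ha hd']
          apply HomogeneousLocalization.val_injective
          rw [HomogeneousLocalization.val_mul, bmk_val, bmk_val, bmk_val, Localization.mk_mul,
            Localization.mk_eq_mk_iff, Localization.r_iff_exists]
          refine ⟨1, ?_⟩
          simp only [Submonoid.coe_one, Submonoid.coe_mul, one_mul, pow_add]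
          try ring

/-- The canonical ring homomorphism `A → A[1/a]₀`, `c ↦ Σ cₖ / aᵏ`. -/
noncomputable def beta (ha : a ∈ 𝒜 1) (hA : ∀ n : ℤ, n < 0 → 𝒜 n = ⊥) :
    A →+* HomogeneousLocalization.Away 𝒜 a where
  toFun := betaFun 𝒜 a ha
  map_zero' := betaFun_zero 𝒜 a ha
  map_add' := betaFun_add 𝒜 a ha
  map_mul' := betaFun_mul 𝒜 a ha hA
  map_one' := by
    rw [betaFun_of_mem 𝒜 a ha (n := 0) (by exact_mod_cast SetLike.one_mem_graded 𝒜)]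
    apply HomogeneousLocalization.val_injective
    rw [bmk_val, HomogeneousLocalization.val_one, ← Localization.mk_one,
      Localization.mk_eq_mk_iff, Localization.r_iff_exists]
    exact ⟨1, by simp⟩

theorem beta_apply (ha : a ∈ 𝒜 1) (hA : ∀ n : ℤ, n < 0 → 𝒜 n = ⊥) (c : A) :
    beta 𝒜 a ha hA c = betaFun 𝒜 a ha c := rfl

theorem beta_a (ha : a ∈ 𝒜 1) (hA : ∀ n : ℤ, n < 0 → 𝒜 n = ⊥) :
    beta 𝒜 a ha hA a = 1 := by
  rw [beta_apply, betaFun_of_mem 𝒜 a ha (n := 1) (by exact_mod_cast ha)]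
  apply HomogeneousLocalization.val_injective
  rw [bmk_val, HomogeneousLocalization.val_one, ← Localization.mk_one,
    Localization.mk_eq_mk_iff, Localization.r_iff_exists]
  exact ⟨1, by simp⟩

theorem beta_pow_a (ha : a ∈ 𝒜 1) (hA : ∀ n : ℤ, n < 0 → 𝒜 n = ⊥) (k : ℕ) :
    beta 𝒜 a ha hA (a ^ k) = 1 := by rw [map_pow, beta_a, one_pow]


set_option maxHeartbeats 1000000
set_option synthInstance.maxHeartbeats 400000

noncomputable abbrev bMod (M : Type*) [AddCommGroup M] [Module A M] :
    Module (HomogeneousLocalization.Away 𝒜 a) (LocalizedModule (Submonoid.powers a) M) :=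
  Module.compHom _
    (algebraMap (HomogeneousLocalization.Away 𝒜 a) (Localization (Submonoid.powers a)))

attribute [local instance] bMod

theorem bsmul_def {M : Type*} [AddCommGroup M] [Module A M]
    (b : HomogeneousLocalization.Away 𝒜 a) (x : LocalizedModule (Submonoid.powers a) M) :
    b • x = b.val • x := rfl

section Modules

variable {M : Type*} [AddCommGroup M] [Module A M] (ℳ : ℤ → AddSubgroup M)


theorem wz_smul_loc {M0 : Type*} [AddCommGroup M0] [Module A M0] (i j : ℤ)
    (x : LocalizedModule (Submonoid.powers a) M0) :
    wz a i • wz a j • x = wz a (i + j) • x := by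
  rw [← mul_smul, wz_mul]

/-- `m / a ^ i` in the localized module. -/
noncomputable def ell (i : ℤ) (m : M) : LocalizedModule (Submonoid.powers a) M :=
  wz a (-i) • LocalizedModule.mk m 1

theorem ell_natCast (n : ℕ) (m : M) :
    ell a (n : ℤ) m = LocalizedModule.mk m ⟨a ^ n, powMem a n⟩ := by
  rw [ell, wz_neg_natCast, LocalizedModule.mk_smul_mk, one_smul, mul_one]

theorem ell_add (i : ℤ) (m m' : M) : ell a i (m + m') = ell a i m + ell a i m' := by
  rw [ell, ell, ell, ← smul_add]
  congr 1
  rw [LocalizedModule.mk_add_mk, one_smul, one_smul, mul_one]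

theorem ell_zero (i : ℤ) : ell a i (0 : M) = 0 := by
  rw [ell, LocalizedModule.zero_mk, smul_zero]

theorem eq_ell (n : ℕ) {m : M} {x : LocalizedModule (Submonoid.powers a) M}
    (h : (a ^ n : A) • x = LocalizedModule.mk m 1) : x = ell a (n : ℤ) m := by
  rw [ell, show -((n : ℕ) : ℤ) = -(n : ℤ) from rfl]
  exact eq_wz_of a n h

theorem ell_homog_smul (ha : a ∈ 𝒜 1) (n : ℕ) (c : A) (hc : c ∈ 𝒜 (n : ℤ)) (i : ℤ) (m : M) :
    ell a ((n : ℤ) + i) (c • m) = (bmk 𝒜 a ha n c hc).val • ell a i m := by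
  have hv : (bmk 𝒜 a ha n c hc).val
      = algebraMap A (Localization (Submonoid.powers a)) c * wz a (-(n : ℤ)) := by
    rw [bmk_val, wz_neg_natCast, ← Localization.mk_one_eq_algebraMap, Localization.mk_mul]
    simp
  rw [hv, ell, ell, mul_smul, wz_smul a (-(n:ℤ)) (-i),
    show -(n:ℤ) + -i = -((n:ℤ)+i) by ring, ← mul_smul, mul_comm, mul_smul,
    algebraMap_smul, LocalizedModule.smul'_mk]

theorem ell_mem (ha : a ∈ 𝒜 1)
    (hℳ : ∀ (i j : ℤ), ∀ c ∈ 𝒜 i, ∀ m ∈ ℳ j, c • m ∈ ℳ (i + j))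
    {i : ℤ} {m : M} (hm : m ∈ ℳ i) : ell a i m ∈ modDegZero 𝒜 a M ℳ := by
  apply Submodule.subset_span
  by_cases h : 0 ≤ i
  · refine ⟨i.toNat, m, by rwa [Int.toNat_of_nonneg h], ?_⟩
    have h1 : -i = -((i.toNat : ℕ) : ℤ) := by omega
    rw [ell, h1, smul_wz_smul]
  · refine ⟨0, a ^ (-i).toNat • m, ?_, ?_⟩
    · have := hℳ (((-i).toNat : ℕ) : ℤ) i _ (apow_mem 𝒜 a ha _) m hm
      rwa [show ((((-i).toNat : ℕ) : ℤ) + i) = ((0 : ℕ) : ℤ) by omega] at this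
    · have h1 : -i = (((-i).toNat : ℕ) : ℤ) := by omega
      rw [pow_zero, one_smul, ell, h1, wz_natCast, algebraMap_smul, LocalizedModule.smul'_mk, Int.toNat_natCast]

variable [DirectSum.Decomposition ℳ]

noncomputable def DMcomp (ha : a ∈ 𝒜 1)
    (hℳ : ∀ (i j : ℤ), ∀ c ∈ 𝒜 i, ∀ m ∈ ℳ j, c • m ∈ ℳ (i + j)) (i : ℤ) :
    ℳ i →+ (modDegZero 𝒜 a M ℳ) where
  toFun m := ⟨ell a i m.1, ell_mem 𝒜 a ℳ ha hℳ m.2⟩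
  map_zero' := Subtype.ext (by simpa using ell_zero a i)
  map_add' m m' := Subtype.ext (by simpa using ell_add a i m.1 m'.1)

/-- The degree-zero normalization map `M → M[1/a]₀`, `m ↦ Σ mᵢ / aⁱ`. -/
noncomputable def DM (ha : a ∈ 𝒜 1)
    (hℳ : ∀ (i j : ℤ), ∀ c ∈ 𝒜 i, ∀ m ∈ ℳ j, c • m ∈ ℳ (i + j)) :
    M →+ (modDegZero 𝒜 a M ℳ) :=
  (DirectSum.toAddMonoid (DMcomp 𝒜 a ℳ ha hℳ)).comp
    (DirectSum.decomposeAddEquiv ℳ).toAddMonoidHom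

theorem DM_of_mem (ha : a ∈ 𝒜 1)
    (hℳ : ∀ (i j : ℤ), ∀ c ∈ 𝒜 i, ∀ m ∈ ℳ j, c • m ∈ ℳ (i + j))
    {i : ℤ} {m : M} (hm : m ∈ ℳ i) :
    DM 𝒜 a ℳ ha hℳ m = ⟨ell a i m, ell_mem 𝒜 a ℳ ha hℳ hm⟩ := by
  rw [DM, AddMonoidHom.comp_apply]
  rw [show (DirectSum.decomposeAddEquiv ℳ).toAddMonoidHom m = DirectSum.decompose ℳ m from rfl,
    DirectSum.decompose_of_mem ℳ hm, DirectSum.toAddMonoid_of]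
  rfl

theorem DM_smul (ha : a ∈ 𝒜 1) (hA : ∀ n : ℤ, n < 0 → 𝒜 n = ⊥)
    (hℳ : ∀ (i j : ℤ), ∀ c ∈ 𝒜 i, ∀ m ∈ ℳ j, c • m ∈ ℳ (i + j)) (c : A) (m : M) :
    DM 𝒜 a ℳ ha hℳ (c • m) = beta 𝒜 a ha hA c • DM 𝒜 a ℳ ha hℳ m := by
  induction m using DirectSum.Decomposition.inductionOn ℳ with
  | zero => rw [smul_zero, map_zero, smul_zero]
  | add m m' hm hm' => rw [smul_add, map_add, map_add, smul_add, hm, hm']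
  | homogeneous m =>
    rename_i j
    obtain ⟨m, hm⟩ := m
    dsimp only
    induction c using DirectSum.Decomposition.inductionOn 𝒜 with
    | zero => rw [zero_smul, map_zero, map_zero, zero_smul]
    | add c c' hc hc' => rw [add_smul, map_add, map_add, add_smul, hc, hc']
    | homogeneous c =>
      rename_i i
      obtain ⟨c, hc⟩ := c
      dsimp only
      rcases lt_or_ge i 0 with h | h
      · obtain rfl : c = 0 := mem_neg_eq_zero 𝒜 hA h hc
        rw [zero_smul, map_zero, map_zero, zero_smul]
      · have hc' : c ∈ 𝒜 ((i.toNat : ℕ) : ℤ) := by rwa [Int.toNat_of_nonneg h]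
        have hcm : c • m ∈ ℳ (((i.toNat : ℕ) : ℤ) + j) := hℳ _ _ _ hc' _ hm
        rw [DM_of_mem 𝒜 a ℳ ha hℳ hcm, DM_of_mem 𝒜 a ℳ ha hℳ hm,
          beta_apply, betaFun_of_mem 𝒜 a ha hc']
        apply Subtype.ext
        rw [SetLike.val_smul, bsmul_def]
        exact ell_homog_smul 𝒜 a ha i.toNat c hc' j m

end Modules

section TwoModules

variable {M N : Type*} [AddCommGroup M] [Module A M] [AddCommGroup N] [Module A N]

/-- The bilinear map `M → N[1/a] → (M ⊗ N)[1/a]`. -/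
noncomputable def g1 : M →ₗ[A] (LocalizedModule (Submonoid.powers a) N →ₗ[A]
    LocalizedModule (Submonoid.powers a) (TensorProduct A M N)) :=
  (IsLocalizedModule.map (Submonoid.powers a)
      (LocalizedModule.mkLinearMap (Submonoid.powers a) N)
      (LocalizedModule.mkLinearMap (Submonoid.powers a) (TensorProduct A M N))).comp
    (TensorProduct.mk A M N)

theorem g1_mk (m : M) (n : N) (t : Submonoid.powers a) :
    g1 a m (LocalizedModule.mk n t) = LocalizedModule.mk (m ⊗ₜ n) t := by
  rw [g1, LinearMap.comp_apply, IsLocalizedModule.mk_eq_mk', IsLocalizedModule.map_mk',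
    ← IsLocalizedModule.mk_eq_mk']
  rfl

/-- The localized tensor pairing `M[1/a] × N[1/a] → (M ⊗ N)[1/a]`. -/
noncomputable def mu (x : LocalizedModule (Submonoid.powers a) M)
    (y : LocalizedModule (Submonoid.powers a) N) :
    LocalizedModule (Submonoid.powers a) (TensorProduct A M N) :=
  LocalizedModule.lift (Submonoid.powers a) ((g1 a).flip y)
    (IsLocalizedModule.map_units (LocalizedModule.mkLinearMap _ _)) x

theorem mu_mk (m : M) (n : N) (s t : Submonoid.powers a) :
    mu a (LocalizedModule.mk m s) (LocalizedModule.mk n t)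
      = LocalizedModule.mk (m ⊗ₜ n) (s * t) := by
  rw [mu, LocalizedModule.lift_mk, Module.End.algebraMap_isUnit_inv_apply_eq_iff,
    LinearMap.flip_apply, g1_mk, LocalizedModule.smul'_mk, ← Submonoid.smul_def,
    LocalizedModule.mk_cancel_common_left]

theorem mu_zero_left (y : LocalizedModule (Submonoid.powers a) N) :
    mu a (0 : LocalizedModule (Submonoid.powers a) M) y = 0 :=
  LinearMap.map_zero _

theorem mu_add_left (x x' : LocalizedModule (Submonoid.powers a) M)
    (y : LocalizedModule (Submonoid.powers a) N) :
    mu a (x + x') y = mu a x y + mu a x' y :=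
  LinearMap.map_add _ x x'

theorem mu_zero_right (x : LocalizedModule (Submonoid.powers a) M) :
    mu a x (0 : LocalizedModule (Submonoid.powers a) N) = 0 := by
  induction x using LocalizedModule.induction_on with
  | _ m s =>
    rw [show (0 : LocalizedModule (Submonoid.powers a) N) = LocalizedModule.mk 0 1 from
      (LocalizedModule.zero_mk _).symm, mu_mk, TensorProduct.tmul_zero, LocalizedModule.zero_mk]

theorem mu_add_right (x : LocalizedModule (Submonoid.powers a) M)
    (y y' : LocalizedModule (Submonoid.powers a) N) :
    mu a x (y + y') = mu a x y + mu a x y' := by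
  rw [mu, mu, mu, map_add]
  induction x using LocalizedModule.induction_on with
  | _ m s =>
    rw [LocalizedModule.lift_mk, LocalizedModule.lift_mk, LocalizedModule.lift_mk,
      LinearMap.add_apply, map_add]

theorem mu_rsmul_left (r : Localization (Submonoid.powers a))
    (x : LocalizedModule (Submonoid.powers a) M)
    (y : LocalizedModule (Submonoid.powers a) N) :
    mu a (r • x) y = r • mu a x y := by
  induction r using Localization.induction_on with
  | _ p =>
    induction x using LocalizedModule.induction_on with
    | _ m s =>
      induction y using LocalizedModule.induction_on with
      | _ n t =>
        rw [LocalizedModule.mk_smul_mk, mu_mk, mu_mk, LocalizedModule.mk_smul_mk,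
          TensorProduct.smul_tmul', mul_assoc]

theorem mu_rsmul_right (r : Localization (Submonoid.powers a))
    (x : LocalizedModule (Submonoid.powers a) M)
    (y : LocalizedModule (Submonoid.powers a) N) :
    mu a x (r • y) = r • mu a x y := by
  induction r using Localization.induction_on with
  | _ p =>
    induction x using LocalizedModule.induction_on with
    | _ m s =>
      induction y using LocalizedModule.induction_on with
      | _ n t =>
        rw [LocalizedModule.mk_smul_mk, mu_mk, mu_mk, LocalizedModule.mk_smul_mk,
          ← TensorProduct.tmul_smul, mul_left_comm]

theorem mu_asmul_left (c : A) (x : LocalizedModule (Submonoid.powers a) M)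
    (y : LocalizedModule (Submonoid.powers a) N) :
    mu a ((c : A) • x) y = c • mu a x y := by
  rw [← algebraMap_smul (Localization (Submonoid.powers a)) c x, mu_rsmul_left,
    algebraMap_smul]

theorem mu_asmul_right (c : A) (x : LocalizedModule (Submonoid.powers a) M)
    (y : LocalizedModule (Submonoid.powers a) N) :
    mu a x ((c : A) • y) = c • mu a x y := by
  rw [← algebraMap_smul (Localization (Submonoid.powers a)) c y, mu_rsmul_right,
    algebraMap_smul]

end TwoModules

theorem beta_mk_num (ha : a ∈ 𝒜 1) (hA : ∀ n : ℤ, n < 0 → 𝒜 n = ⊥)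
    (nds : HomogeneousLocalization.NumDenSameDeg 𝒜 (Submonoid.powers a)) :
    beta 𝒜 a ha hA nds.num = HomogeneousLocalization.mk nds * beta 𝒜 a ha hA nds.den := by
  rcases lt_or_ge nds.deg 0 with h | h
  · have h1 : (nds.num : A) = 0 := mem_neg_eq_zero 𝒜 hA h nds.num.2
    have h2 : (nds.den : A) = 0 := mem_neg_eq_zero 𝒜 hA h nds.den.2
    rw [h1, h2, map_zero, mul_zero]
  · have hn : (nds.num : A) ∈ 𝒜 ((nds.deg.toNat : ℕ) : ℤ) := by
      rw [Int.toNat_of_nonneg h]; exact nds.num.2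
    have hd : (nds.den : A) ∈ 𝒜 ((nds.deg.toNat : ℕ) : ℤ) := by
      rw [Int.toNat_of_nonneg h]; exact nds.den.2
    rw [beta_apply, beta_apply, betaFun_of_mem 𝒜 a ha hn, betaFun_of_mem 𝒜 a ha hd]
    apply HomogeneousLocalization.val_injective
    rw [HomogeneousLocalization.val_mul, bmk_val, bmk_val, HomogeneousLocalization.val_mk,
      Localization.mk_mul, Localization.mk_eq_mk_iff, Localization.r_iff_exists]
    refine ⟨1, ?_⟩
    simp only [Submonoid.coe_one, Submonoid.coe_mul, one_mul]
    ring

section Psi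

variable {M N : Type*} [AddCommGroup M] [Module A M] [AddCommGroup N] [Module A N]
  (ℳ : ℤ → AddSubgroup M) (𝒩 : ℤ → AddSubgroup N)
  [DirectSum.Decomposition ℳ] [DirectSum.Decomposition 𝒩]
  (ha : a ∈ 𝒜 1) (hA : ∀ n : ℤ, n < 0 → 𝒜 n = ⊥)
  (hℳ : ∀ (i j : ℤ), ∀ c ∈ 𝒜 i, ∀ m ∈ ℳ j, c • m ∈ ℳ (i + j))
  (h𝒩 : ∀ (i j : ℤ), ∀ c ∈ 𝒜 i, ∀ x ∈ 𝒩 j, c • x ∈ 𝒩 (i + j))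

noncomputable def bilPsi :
    M →+ N →+ (TensorProduct (HomogeneousLocalization.Away 𝒜 a)
      (modDegZero 𝒜 a M ℳ) (modDegZero 𝒜 a N 𝒩)) where
  toFun m :=
    { toFun := fun n => DM 𝒜 a ℳ ha hℳ m ⊗ₜ DM 𝒜 a 𝒩 ha h𝒩 n
      map_zero' := by rw [map_zero, TensorProduct.tmul_zero]
      map_add' := fun x y => by rw [map_add, TensorProduct.tmul_add] }
  map_zero' := AddMonoidHom.ext fun n => by
    simp only [AddMonoidHom.coe_mk, ZeroHom.coe_mk, map_zero, TensorProduct.zero_tmul,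
      AddMonoidHom.zero_apply]
  map_add' m m' := AddMonoidHom.ext fun n => by
    simp only [AddMonoidHom.coe_mk, ZeroHom.coe_mk, map_add, TensorProduct.add_tmul,
      AddMonoidHom.add_apply]

include hA in
theorem bilPsi_balanced : ∀ (c : A) (m : M) (n : N),
    bilPsi 𝒜 a ℳ 𝒩 ha hℳ h𝒩 (c • m) n = bilPsi 𝒜 a ℳ 𝒩 ha hℳ h𝒩 m (c • n) := by
  intro c m n
  show (DM 𝒜 a ℳ ha hℳ (c • m)) ⊗ₜ _ = _ ⊗ₜ (DM 𝒜 a 𝒩 ha h𝒩 (c • n))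
  rw [DM_smul 𝒜 a ℳ ha hA hℳ, DM_smul 𝒜 a 𝒩 ha hA h𝒩, TensorProduct.smul_tmul]

/-- The degree-zero normalization map on the tensor product. -/
noncomputable def Psi0 :
    TensorProduct A M N →+ (TensorProduct (HomogeneousLocalization.Away 𝒜 a)
      (modDegZero 𝒜 a M ℳ) (modDegZero 𝒜 a N 𝒩)) :=
  TensorProduct.liftAddHom (bilPsi 𝒜 a ℳ 𝒩 ha hℳ h𝒩)
    (bilPsi_balanced 𝒜 a ℳ 𝒩 ha hA hℳ h𝒩)

theorem Psi0_tmul (m : M) (n : N) :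
    Psi0 𝒜 a ℳ 𝒩 ha hA hℳ h𝒩 (m ⊗ₜ n) = DM 𝒜 a ℳ ha hℳ m ⊗ₜ DM 𝒜 a 𝒩 ha h𝒩 n := rfl

theorem Psi0_smul (c : A) (t : TensorProduct A M N) :
    Psi0 𝒜 a ℳ 𝒩 ha hA hℳ h𝒩 (c • t) = beta 𝒜 a ha hA c • Psi0 𝒜 a ℳ 𝒩 ha hA hℳ h𝒩 t := by
  induction t using TensorProduct.induction_on with
  | zero => rw [smul_zero, map_zero, smul_zero]
  | tmul m n =>
    rw [TensorProduct.smul_tmul', Psi0_tmul, Psi0_tmul, DM_smul 𝒜 a ℳ ha hA hℳ,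
      TensorProduct.smul_tmul']
  | add x y hx hy => rw [smul_add, map_add, map_add, smul_add, hx, hy]

theorem Psi0_pow_smul {d : A} (hd : d ∈ Submonoid.powers a) (t : TensorProduct A M N) :
    Psi0 𝒜 a ℳ 𝒩 ha hA hℳ h𝒩 (d • t) = Psi0 𝒜 a ℳ 𝒩 ha hA hℳ h𝒩 t := by
  obtain ⟨k, rfl⟩ := hd
  rw [Psi0_smul, beta_pow_a, one_smul]

noncomputable def psiFun (z : LocalizedModule (Submonoid.powers a) (TensorProduct A M N)) :
    TensorProduct (HomogeneousLocalization.Away 𝒜 a)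
      (modDegZero 𝒜 a M ℳ) (modDegZero 𝒜 a N 𝒩) :=
  z.liftOn (fun p => Psi0 𝒜 a ℳ 𝒩 ha hA hℳ h𝒩 p.1)
    (by
      rintro ⟨t, s⟩ ⟨t', s'⟩ ⟨u, hu⟩
      dsimp only
      simp only [Submonoid.smul_def] at hu
      have h1 := congrArg (Psi0 𝒜 a ℳ 𝒩 ha hA hℳ h𝒩) hu
      rwa [Psi0_pow_smul 𝒜 a ℳ 𝒩 ha hA hℳ h𝒩 u.2, Psi0_pow_smul 𝒜 a ℳ 𝒩 ha hA hℳ h𝒩 s'.2,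
        Psi0_pow_smul 𝒜 a ℳ 𝒩 ha hA hℳ h𝒩 u.2, Psi0_pow_smul 𝒜 a ℳ 𝒩 ha hA hℳ h𝒩 s.2] at h1)

theorem psiFun_mk (t : TensorProduct A M N) (s : Submonoid.powers a) :
    psiFun 𝒜 a ℳ 𝒩 ha hA hℳ h𝒩 (LocalizedModule.mk t s) = Psi0 𝒜 a ℳ 𝒩 ha hA hℳ h𝒩 t :=
  LocalizedModule.liftOn_mk _ _ _

theorem psiFun_add (z z' : LocalizedModule (Submonoid.powers a) (TensorProduct A M N)) :
    psiFun 𝒜 a ℳ 𝒩 ha hA hℳ h𝒩 (z + z')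
      = psiFun 𝒜 a ℳ 𝒩 ha hA hℳ h𝒩 z + psiFun 𝒜 a ℳ 𝒩 ha hA hℳ h𝒩 z' := by
  induction z, z' using LocalizedModule.induction_on₂ with
  | _ t t' s s' =>
    rw [LocalizedModule.mk_add_mk, psiFun_mk, psiFun_mk, psiFun_mk, map_add,
      Submonoid.smul_def, Submonoid.smul_def, Psi0_pow_smul 𝒜 a ℳ 𝒩 ha hA hℳ h𝒩 s'.2,
      Psi0_pow_smul 𝒜 a ℳ 𝒩 ha hA hℳ h𝒩 s.2]

theorem psiFun_bsmul (b : HomogeneousLocalization.Away 𝒜 a)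
    (z : LocalizedModule (Submonoid.powers a) (TensorProduct A M N)) :
    psiFun 𝒜 a ℳ 𝒩 ha hA hℳ h𝒩 (b • z) = b • psiFun 𝒜 a ℳ 𝒩 ha hA hℳ h𝒩 z := by
  obtain ⟨nds, rfl⟩ := HomogeneousLocalization.mk_surjective b
  induction z using LocalizedModule.induction_on with
  | _ t s =>
    rw [bsmul_def, HomogeneousLocalization.val_mk, LocalizedModule.mk_smul_mk, psiFun_mk,
      psiFun_mk, Psi0_smul, beta_mk_num 𝒜 a ha hA, mul_smul]
    congr 1
    rw [← Psi0_smul]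
    exact Psi0_pow_smul 𝒜 a ℳ 𝒩 ha hA hℳ h𝒩 nds.den_mem t

theorem mu_mem {x : LocalizedModule (Submonoid.powers a) M}
    {y : LocalizedModule (Submonoid.powers a) N}
    (hx : x ∈ modDegZero 𝒜 a M ℳ) (hy : y ∈ modDegZero 𝒜 a N 𝒩) :
    mu a x y ∈ modDegZero 𝒜 a (TensorProduct A M N) (tensorGrade ℳ 𝒩) := by
  induction hx using Submodule.span_induction with
  | zero => rw [mu_zero_left]; exact Submodule.zero_mem _
  | add x1 x2 hx1 hx2 ih1 ih2 => rw [mu_add_left]; exact Submodule.add_mem _ ih1 ih2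
  | smul b x1 hx1 ih =>
    rw [bsmul_def, mu_rsmul_left, ← bsmul_def]
    exact Submodule.smul_mem _ b ih
  | mem x hxg =>
    induction hy using Submodule.span_induction with
    | zero => rw [mu_zero_right]; exact Submodule.zero_mem _
    | add y1 y2 hy1 hy2 ih1 ih2 => rw [mu_add_right]; exact Submodule.add_mem _ ih1 ih2
    | smul b y1 hy1 ih =>
      rw [bsmul_def, mu_rsmul_right, ← bsmul_def]
      exact Submodule.smul_mem _ b ih
    | mem y hyg =>
      obtain ⟨n, m, hm, hxm⟩ := hxg
      obtain ⟨k, m', hm', hym⟩ := hyg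
      apply Submodule.subset_span
      refine ⟨n + k, m ⊗ₜ m', ?_, ?_⟩
      · exact AddSubgroup.subset_closure ⟨(n : ℤ), (k : ℤ), m, m', by push_cast; ring, hm, hm', rfl⟩
      · have hc : (a ^ (n + k) : A) • mu a x y = mu a ((a ^ n : A) • x) ((a ^ k : A) • y) := by
          rw [mu_asmul_left, mu_asmul_right, smul_smul, ← pow_add]
        rw [hc, hxm, hym, mu_mk, mul_one]

noncomputable def bilB :
    (modDegZero 𝒜 a M ℳ) →ₗ[HomogeneousLocalization.Away 𝒜 a]
      (modDegZero 𝒜 a N 𝒩) →ₗ[HomogeneousLocalization.Away 𝒜 a]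
      (modDegZero 𝒜 a (TensorProduct A M N) (tensorGrade ℳ 𝒩)) :=
  LinearMap.mk₂ (HomogeneousLocalization.Away 𝒜 a)
    (fun x y => ⟨mu a x.1 y.1, mu_mem 𝒜 a ℳ 𝒩 x.2 y.2⟩)
    (fun x x' y => Subtype.ext (by simp only [Submodule.coe_add]; exact mu_add_left a _ _ _))
    (fun b x y => Subtype.ext (by
      show mu a ((b • x : modDegZero 𝒜 a M ℳ) : LocalizedModule (Submonoid.powers a) M) y.1
        = ((b • _ : modDegZero 𝒜 a (TensorProduct A M N) (tensorGrade ℳ 𝒩)) :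
            LocalizedModule (Submonoid.powers a) (TensorProduct A M N))
      rw [SetLike.val_smul, SetLike.val_smul, bsmul_def, bsmul_def, mu_rsmul_left]))
    (fun x y y' => Subtype.ext (by simp only [Submodule.coe_add]; exact mu_add_right a _ _ _))
    (fun b x y => Subtype.ext (by
      show mu a x.1 ((b • y : modDegZero 𝒜 a N 𝒩) : LocalizedModule (Submonoid.powers a) N)
        = ((b • _ : modDegZero 𝒜 a (TensorProduct A M N) (tensorGrade ℳ 𝒩)) :
            LocalizedModule (Submonoid.powers a) (TensorProduct A M N))
      rw [SetLike.val_smul, SetLike.val_smul, bsmul_def, bsmul_def, mu_rsmul_right]))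

noncomputable def phi0 :
    (TensorProduct (HomogeneousLocalization.Away 𝒜 a)
      (modDegZero 𝒜 a M ℳ) (modDegZero 𝒜 a N 𝒩))
      →ₗ[HomogeneousLocalization.Away 𝒜 a]
    (modDegZero 𝒜 a (TensorProduct A M N) (tensorGrade ℳ 𝒩)) :=
  TensorProduct.lift (bilB 𝒜 a ℳ 𝒩)

theorem phi0_tmul (x : modDegZero 𝒜 a M ℳ) (y : modDegZero 𝒜 a N 𝒩) :
    (phi0 𝒜 a ℳ 𝒩 (x ⊗ₜ y) : LocalizedModule (Submonoid.powers a) (TensorProduct A M N))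
      = mu a x.1 y.1 := rfl


theorem ell_neg {P : Type*} [AddCommGroup P] [Module A P] (i : ℤ) (m : P) :
    ell a i (-m) = -(ell a i m) := by
  rw [ell, ell, ← LocalizedModule.mkLinearMap_apply, ← LocalizedModule.mkLinearMap_apply,
    map_neg, smul_neg]

theorem psiL_apply (z : modDegZero 𝒜 a (TensorProduct A M N) (tensorGrade ℳ 𝒩)) : True := trivial

/-- `psiFun` as a linear map on the degree-zero part. -/
noncomputable def psiL :
    (modDegZero 𝒜 a (TensorProduct A M N) (tensorGrade ℳ 𝒩))
      →ₗ[HomogeneousLocalization.Away 𝒜 a]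
    (TensorProduct (HomogeneousLocalization.Away 𝒜 a)
      (modDegZero 𝒜 a M ℳ) (modDegZero 𝒜 a N 𝒩)) where
  toFun z := psiFun 𝒜 a ℳ 𝒩 ha hA hℳ h𝒩 z.1
  map_add' z z' := by rw [Submodule.coe_add, psiFun_add]
  map_smul' b z := by rw [SetLike.val_smul, psiFun_bsmul]; rfl

theorem phi0_tmul' (x : modDegZero 𝒜 a M ℳ) (y : modDegZero 𝒜 a N 𝒩) :
    phi0 𝒜 a ℳ 𝒩 (x ⊗ₜ y) = ⟨mu a x.1 y.1, mu_mem 𝒜 a ℳ 𝒩 x.2 y.2⟩ :=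
  Subtype.ext rfl

theorem phi0_Psi0 (j : ℤ) (t : TensorProduct A M N) (ht : t ∈ tensorGrade ℳ 𝒩 j) :
    ((phi0 𝒜 a ℳ 𝒩 (Psi0 𝒜 a ℳ 𝒩 ha hA hℳ h𝒩 t)) :
      LocalizedModule (Submonoid.powers a) (TensorProduct A M N)) = ell a j t := by
  induction ht using AddSubgroup.closure_induction with
  | mem t htg =>
    obtain ⟨i1, i2, m, x, hij, hm, hx, rfl⟩ := htg
    rw [Psi0_tmul, DM_of_mem 𝒜 a ℳ ha hℳ hm, DM_of_mem 𝒜 a 𝒩 ha h𝒩 hx, phi0_tmul]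
    dsimp only
    simp only [ell]
    rw [mu_rsmul_left, mu_rsmul_right, wz_smul_loc, mu_mk, mul_one,
      show -i1 + -i2 = -j by omega]
  | zero =>
    rw [map_zero, map_zero, ZeroMemClass.coe_zero, ell_zero]
  | add x y hxc hyc ihx ihy =>
    rw [map_add, map_add, Submodule.coe_add, ihx, ihy, ell_add]
  | neg x hxc ihx =>
    rw [map_neg, map_neg, NegMemClass.coe_neg, ihx, ell_neg]

theorem phi0_psi (z : modDegZero 𝒜 a (TensorProduct A M N) (tensorGrade ℳ 𝒩)) :
    phi0 𝒜 a ℳ 𝒩 (psiL 𝒜 a ℳ 𝒩 ha hA hℳ h𝒩 z) = z := by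
  obtain ⟨z, hz⟩ := z
  have key : ∀ (v : LocalizedModule (Submonoid.powers a) (TensorProduct A M N))
      (hv : v ∈ modDegZero 𝒜 a (TensorProduct A M N) (tensorGrade ℳ 𝒩)),
      ((phi0 𝒜 a ℳ 𝒩 (psiFun 𝒜 a ℳ 𝒩 ha hA hℳ h𝒩 v)) :
        LocalizedModule (Submonoid.powers a) (TensorProduct A M N)) = v := by
    intro v hv
    induction hv using Submodule.span_induction with
    | mem v hvg =>
      obtain ⟨n, t, ht, hsm⟩ := hvg
      have hv' : v = ell a (n : ℤ) t := eq_ell a n hsm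
      rw [hv', ell_natCast, psiFun_mk, phi0_Psi0 𝒜 a ℳ 𝒩 ha hA hℳ h𝒩 (n : ℤ) t ht,
        ell_natCast]
    | zero =>
      rw [show (0 : LocalizedModule (Submonoid.powers a) (TensorProduct A M N))
          = LocalizedModule.mk 0 1 from (LocalizedModule.zero_mk _).symm,
        psiFun_mk, map_zero, map_zero, ZeroMemClass.coe_zero, LocalizedModule.zero_mk]
    | add v1 v2 hv1 hv2 ih1 ih2 => rw [psiFun_add, map_add, Submodule.coe_add, ih1, ih2]
    | smul b v1 hv1 ih => rw [psiFun_bsmul, map_smul, SetLike.val_smul, ih]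
  exact Subtype.ext (key z hz)

theorem psi_phi0 (x : modDegZero 𝒜 a M ℳ) (y : modDegZero 𝒜 a N 𝒩) :
    psiL 𝒜 a ℳ 𝒩 ha hA hℳ h𝒩 (phi0 𝒜 a ℳ 𝒩 (x ⊗ₜ y)) = x ⊗ₜ y := by
  obtain ⟨x, hx⟩ := x
  obtain ⟨y, hy⟩ := y
  induction hx using Submodule.span_induction with
  | zero =>
    rw [show (⟨0, Submodule.zero_mem _⟩ : modDegZero 𝒜 a M ℳ) = 0 from rfl,
      TensorProduct.zero_tmul, map_zero, map_zero]
  | add v1 v2 hv1 hv2 ih1 ih2 =>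
    rw [show (⟨v1 + v2, Submodule.add_mem _ hv1 hv2⟩ : modDegZero 𝒜 a M ℳ)
        = ⟨v1, hv1⟩ + ⟨v2, hv2⟩ from rfl,
      TensorProduct.add_tmul, map_add, map_add, ih1, ih2]
  | smul b v1 hv1 ih =>
    rw [show (⟨b • v1, Submodule.smul_mem _ b hv1⟩ : modDegZero 𝒜 a M ℳ)
        = b • ⟨v1, hv1⟩ from rfl,
      ← TensorProduct.smul_tmul', map_smul, map_smul, ih]
  | mem v hvg =>
    induction hy using Submodule.span_induction with
    | zero =>
      rw [show (⟨0, Submodule.zero_mem _⟩ : modDegZero 𝒜 a N 𝒩) = 0 from rfl,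
        TensorProduct.tmul_zero, map_zero, map_zero]
    | add u1 u2 hu1 hu2 ih1 ih2 =>
      rw [show (⟨u1 + u2, Submodule.add_mem _ hu1 hu2⟩ : modDegZero 𝒜 a N 𝒩)
          = ⟨u1, hu1⟩ + ⟨u2, hu2⟩ from rfl,
        TensorProduct.tmul_add, map_add, map_add, ih1, ih2]
    | smul b u1 hu1 ih =>
      rw [show (⟨b • u1, Submodule.smul_mem _ b hu1⟩ : modDegZero 𝒜 a N 𝒩)
          = b • ⟨u1, hu1⟩ from rfl,
        TensorProduct.tmul_smul, map_smul, map_smul, ih]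
    | mem u hug =>
      obtain ⟨n, m, hm, hsm⟩ := hvg
      obtain ⟨k, m', hm', hsm'⟩ := hug
      have hv' : v = ell a (n : ℤ) m := eq_ell a n hsm
      have hu' : u = ell a (k : ℤ) m' := eq_ell a k hsm'
      have hmu : mu a v u = ell a ((n + k : ℕ) : ℤ) (m ⊗ₜ m') := by
        apply eq_ell
        rw [show ((a ^ (n + k) : A)) • mu a v u = mu a ((a ^ n : A) • v) ((a ^ k : A) • u) from
          by rw [mu_asmul_left, mu_asmul_right, smul_smul, ← pow_add], hsm, hsm', mu_mk, mul_one]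
      rw [phi0_tmul']
      show psiFun 𝒜 a ℳ 𝒩 ha hA hℳ h𝒩 (mu a v u) = _
      rw [hmu, ell_natCast, psiFun_mk, Psi0_tmul, DM_of_mem 𝒜 a ℳ ha hℳ hm,
        DM_of_mem 𝒜 a 𝒩 ha h𝒩 hm']
      congr 1 <;> apply Subtype.ext
      · exact hv'.symm
      · exact hu'.symm

/-- The final isomorphism. -/
noncomputable def finalEquiv :
    (TensorProduct (HomogeneousLocalization.Away 𝒜 a)
      (modDegZero 𝒜 a M ℳ) (modDegZero 𝒜 a N 𝒩))
    ≃ₗ[HomogeneousLocalization.Away 𝒜 a]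
    (modDegZero 𝒜 a (TensorProduct A M N) (tensorGrade ℳ 𝒩)) :=
  LinearEquiv.ofLinear (phi0 𝒜 a ℳ 𝒩) (psiL 𝒜 a ℳ 𝒩 ha hA hℳ h𝒩)
    (LinearMap.ext fun z => phi0_psi 𝒜 a ℳ 𝒩 ha hA hℳ h𝒩 z)
    (TensorProduct.ext' fun x y => psi_phi0 𝒜 a ℳ 𝒩 ha hA hℳ h𝒩 x y)

end Psi

end Stmt2Aux


/-- for an ℕ-graded commutative ring `A`, ℤ-graded `A`-modules `M`, `N` and a
degree-one element `a ∈ A₁`, there is an isomorphism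
`M[a⁻¹]₀ ⊗_{A[a⁻¹]₀} N[a⁻¹]₀ ≅ ((M ⊗_A N)[a⁻¹])₀` of `A[a⁻¹]₀`-modules. -/
theorem stmt2 {A : Type*} [CommRing A] (𝒜 : ℤ → Submodule ℤ A) [GradedAlgebra 𝒜]
    (hA : ∀ n : ℤ, n < 0 → 𝒜 n = ⊥)
    {M N : Type*} [AddCommGroup M] [Module A M] [AddCommGroup N] [Module A N]
    (ℳ : ℤ → AddSubgroup M) (𝒩 : ℤ → AddSubgroup N)
    [DirectSum.Decomposition ℳ] [DirectSum.Decomposition 𝒩]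
    (hℳ : ∀ (i j : ℤ), ∀ c ∈ 𝒜 i, ∀ m ∈ ℳ j, c • m ∈ ℳ (i + j))
    (h𝒩 : ∀ (i j : ℤ), ∀ c ∈ 𝒜 i, ∀ x ∈ 𝒩 j, c • x ∈ 𝒩 (i + j))
    (a : A) (ha : a ∈ 𝒜 1) :
    letI := Module.compHom (LocalizedModule (Submonoid.powers a) M)
      (algebraMap (HomogeneousLocalization.Away 𝒜 a) (Localization (Submonoid.powers a)))
    letI := Module.compHom (LocalizedModule (Submonoid.powers a) N)
      (algebraMap (HomogeneousLocalization.Away 𝒜 a) (Localization (Submonoid.powers a)))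
    letI := Module.compHom (LocalizedModule (Submonoid.powers a) (TensorProduct A M N))
      (algebraMap (HomogeneousLocalization.Away 𝒜 a) (Localization (Submonoid.powers a)))
    Nonempty
      ((TensorProduct (HomogeneousLocalization.Away 𝒜 a)
          (modDegZero 𝒜 a M ℳ) (modDegZero 𝒜 a N 𝒩)) ≃ₗ[HomogeneousLocalization.Away 𝒜 a]
        (modDegZero 𝒜 a (TensorProduct A M N) (tensorGrade ℳ 𝒩))) := by
  exact ⟨Stmt2Aux.finalEquiv 𝒜 a ℳ 𝒩 ha hA hℳ h𝒩⟩
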